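/- Let $b>0$ and $\tau>0$. For each integer $n\ge 0$, the equation $\omega\cot(\omega\tau)=-b$ has exactly one solution $\omega_n(\tau)$ in the interval $\big((n+\tfrac12)\frac{\pi}{\tau},(n+1)\frac{\pi}{\tau}\big)$. -/

import Mathlib

open Real

lemma sin_ne_zero_of_mem (n : ℕ) (x : ℝ) (hx : ((n:ℝ) + 1/2) * π < x)
    (hx' : x < ((n:ℝ) + 1) * π) : Real.sin x ≠ 0 := by
  intro h
  rcases Real.sin_eq_zero_iff.mp h with ⟨k, hk⟩
  rw [← hk] at hx hx'
  have h1 : ((n:ℝ) + 1/2) < k := (mul_lt_mul_iff_of_pos_right Real.pi_pos).mp hx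
  have h2 : (k:ℝ) < (n:ℝ) + 1 := (mul_lt_mul_iff_of_pos_right Real.pi_pos).mp hx'
  have h3 : (n:ℤ) < k := by exact_mod_cast (by push_cast; linarith : ((n:ℤ):ℝ) < (k:ℝ))
  have h4 : ((n:ℤ) + 1 : ℝ) ≤ (k:ℝ) := by exact_mod_cast h3
  push_cast at h4
  linarith

/-- For `b, τ > 0` and every `n ∈ ℕ`, the equation `ω cot(ωτ) = -b` has exactly one
solution in the interval `((n + 1/2)π/τ, (n+1)π/τ)`. -/
theorem exists_unique_omega (b τ : ℝ) (hb : 0 < b) (hτ : 0 < τ) (n : ℕ) :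
    ∃! ω : ℝ, ω ∈ Set.Ioo (((n : ℝ) + 1 / 2) * π / τ) (((n : ℝ) + 1) * π / τ) ∧
      ω * (Real.cos (ω * τ) / Real.sin (ω * τ)) = -b := by
  have hπ := Real.pi_pos
  set a : ℝ := ((n : ℝ) + 1 / 2) * π / τ with ha
  set r : ℝ := ((n : ℝ) + 1) * π / τ with hr
  have haτ : a * τ = ((n : ℝ) + 1 / 2) * π := div_mul_cancel₀ _ hτ.ne'
  have hrτ : r * τ = ((n : ℝ) + 1) * π := div_mul_cancel₀ _ hτ.ne'
  have har : a < r := by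
    rw [ha, hr, div_lt_div_iff₀ hτ hτ]
    nlinarith
  have ha0 : 0 < a := by rw [ha]; positivity
  have hr0 : 0 < r := lt_trans ha0 har
  -- sin (ω τ) ≠ 0 on the open interval
  have hsin : ∀ ω ∈ Set.Ioo a r, Real.sin (ω * τ) ≠ 0 := by
    intro ω hω
    apply sin_ne_zero_of_mem n
    · rw [← haτ]; exact (mul_lt_mul_iff_of_pos_right hτ).mpr hω.1
    · rw [← hrτ]; exact (mul_lt_mul_iff_of_pos_right hτ).mpr hω.2
  set f : ℝ → ℝ := fun ω => ω * (Real.cos (ω * τ) / Real.sin (ω * τ)) with hf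
  -- derivative of f at points of the open interval
  have hderiv : ∀ ω ∈ Set.Ioo a r, HasDerivAt f
      ((Real.cos (ω*τ) * Real.sin (ω*τ) - ω * τ) / (Real.sin (ω*τ))^2) ω := by
    intro ω hω
    have hs := hsin ω hω
    have hc1 : HasDerivAt (fun x : ℝ => Real.cos (x * τ)) (-Real.sin (ω*τ) * τ) ω :=
      (hasDerivAt_mul_const τ).cos
    have hs1 : HasDerivAt (fun x : ℝ => Real.sin (x * τ)) (Real.cos (ω*τ) * τ) ω :=
      (hasDerivAt_mul_const τ).sin
    have hdiv := hc1.div hs1 hs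
    have hmul := (hasDerivAt_id ω).mul hdiv
    refine hmul.congr_deriv ?_
    have h1 := Real.sin_sq_add_cos_sq (ω*τ)
    have hnum : -Real.sin (ω*τ) * τ * Real.sin (ω*τ) - Real.cos (ω*τ) * (Real.cos (ω*τ) * τ)
        = -τ := by linear_combination (-τ) * h1
    rw [hnum]
    simp only [Pi.div_apply, id]
    field_simp
    ring
  -- derivative is negative
  have hderiv_neg : ∀ ω ∈ Set.Ioo a r,
      (Real.cos (ω*τ) * Real.sin (ω*τ) - ω * τ) / (Real.sin (ω*τ))^2 < 0 := by
    intro ω hω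
    have hs := hsin ω hω
    apply div_neg_of_neg_of_pos
    · have hωτ : π / 2 < ω * τ := by
        have h2 : a * τ < ω * τ := (mul_lt_mul_iff_of_pos_right hτ).mpr hω.1
        rw [haτ] at h2
        nlinarith [Nat.cast_nonneg (α := ℝ) n]
      nlinarith [Real.sin_sq_add_cos_sq (ω*τ), sq_nonneg (Real.sin (ω*τ) - Real.cos (ω*τ)),
        Real.pi_gt_three]
    · positivity
  -- strict antitonicity on Ioo a r
  have hanti : StrictAntiOn f (Set.Ioo a r) := by
    apply strictAntiOn_of_deriv_neg (convex_Ioo a r)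
    · intro x hx
      exact ((hderiv x hx).continuousAt).continuousWithinAt
    · intro x hx
      rw [interior_Ioo] at hx
      rw [(hderiv x hx).deriv]
      exact hderiv_neg x hx
  -- existence via IVT on g
  set g : ℝ → ℝ := fun ω => ω * Real.cos (ω * τ) + b * Real.sin (ω * τ) with hg
  have hgcont : Continuous g := by fun_prop
  have hcosnπ : Real.cos ((n:ℝ)*π) = (-1)^n := by
    simpa using Real.cos_nat_mul_pi_sub 0 n
  have hga : g a = b * (-1)^n := by
    have h1 : a * τ = (n:ℝ) * π + π/2 := by rw [haτ]; ring
    simp only [hg, h1, Real.cos_add, Real.sin_add, Real.cos_pi_div_two, Real.sin_pi_div_two,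
      Real.sin_nat_mul_pi, hcosnπ]
    ring
  have hgr : g r = r * (-1)^(n+1) := by
    have h1 : r * τ = (n:ℝ) * π + π := by rw [hrτ]; ring
    simp only [hg, h1, Real.cos_add, Real.sin_add, Real.cos_pi, Real.sin_pi,
      Real.sin_nat_mul_pi, hcosnπ]
    ring
  have hgconton : ContinuousOn g (Set.Icc a r) := hgcont.continuousOn
  -- find a root of g in the open interval
  have hroot : ∃ ω ∈ Set.Ioo a r, g ω = 0 := by
    rcases Nat.even_or_odd n with he | ho
    · have h1 : g a = b := by rw [hga, he.neg_one_pow, mul_one]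
      have h2 : g r = -r := by rw [hgr, Odd.neg_one_pow (by simpa using he.add_one), mul_neg_one]
      have : (0:ℝ) ∈ Set.Ioo (g r) (g a) := by rw [h1, h2]; constructor <;> linarith
      rcases intermediate_value_Ioo' har.le hgconton this with ⟨ω, hω, hgω⟩
      exact ⟨ω, hω, hgω⟩
    · have h1 : g a = -b := by rw [hga, ho.neg_one_pow, mul_neg_one]
      have h2 : g r = r := by rw [hgr, Even.neg_one_pow (by simpa using ho.add_one), mul_one]
      have : (0:ℝ) ∈ Set.Ioo (g a) (g r) := by rw [h1, h2]; constructor <;> linarith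
      rcases intermediate_value_Ioo har.le hgconton this with ⟨ω, hω, hgω⟩
      exact ⟨ω, hω, hgω⟩
  rcases hroot with ⟨ω, hω, hgω⟩
  have hs := hsin ω hω
  have hfω : f ω = -b := by
    rw [hf]
    have : ω * Real.cos (ω*τ) = -b * Real.sin (ω*τ) := by
      simp only [hg] at hgω; linarith
    field_simp
    linarith [this]
  refine ⟨ω, ⟨hω, hfω⟩, ?_⟩
  rintro y ⟨hy, hfy⟩
  exact hanti.injOn hy hω (hfy.trans hfω.symm)
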